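/- Let K be a number field and let ζ ∈ K be a nonzero element such that for every place σ of K one has e^{-ε} < |ζ|_σ < e^{ε} for some sufficiently small ε > 0 (depending only on K), and |ζ|_σ = 1 for all but finitely many σ. Then ζ is a root of unity. -/

import Mathlib

open IsDedekindDomain NumberField
open scoped Classical

/-- The normalized absolute value at a finite place `v` of a number field `K`. -/
noncomputable def finPlaceAbs (K : Type*) [Field K] [NumberField K]
    (v : HeightOneSpectrum (𝓞 K)) (x : K) : ℝ :=
  if h : (Nat.card (𝓞 K ⧸ v.asIdeal) : NNReal) = 0 then 0
  else (WithZeroMulInt.toNNReal h (v.valuation K x) : ℝ)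

theorem my_le_of_count_le {α : Type*} [CommMonoidWithZero α] [IsCancelMulZero α]
    [UniqueFactorizationMonoid α] {a b : Associates α} (ha : a ≠ 0) (hb : b ≠ 0)
    (h : ∀ p : Associates α, Irreducible p → p.count a.factors ≤ p.count b.factors) :
    a ≤ b := by
  obtain ⟨sa, h_sa⟩ := Associates.factors_eq_some_iff_ne_zero.mpr ha
  obtain ⟨sb, h_sb⟩ := Associates.factors_eq_some_iff_ne_zero.mpr hb
  rw [← Associates.factors_le, h_sa, h_sb, WithTop.coe_le_coe, Multiset.le_iff_count]
  rintro ⟨p, hp⟩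
  have := h p hp
  rwa [h_sa, h_sb, Associates.count_some hp, Associates.count_some hp] at this

theorem my_dvd_of_intVal {R : Type*} [CommRing R] [IsDedekindDomain R]
    {a b : R} (ha : a ≠ 0) (hb : b ≠ 0)
    (h : ∀ v : HeightOneSpectrum R, v.intValuationDef a ≤ v.intValuationDef b) : b ∣ a := by
  have hsa : Associates.mk (Ideal.span {a} : Ideal R) ≠ 0 := by
    rw [Associates.mk_ne_zero, ne_eq, Ideal.zero_eq_bot, Ideal.span_singleton_eq_bot]
    exact ha
  have hsb : Associates.mk (Ideal.span {b} : Ideal R) ≠ 0 := by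
    rw [Associates.mk_ne_zero, ne_eq, Ideal.zero_eq_bot, Ideal.span_singleton_eq_bot]
    exact hb
  have key : @LE.le (Associates (Ideal R)) Associates.instPreorder.toLE
      (Associates.mk (Ideal.span {b} : Ideal R)) (Associates.mk (Ideal.span {a})) := by
    refine my_le_of_count_le hsb hsa fun p hp => ?_
    obtain ⟨P, rfl⟩ := Associates.mk_surjective p
    have hP_irr : Irreducible P := Associates.irreducible_mk.mp hp
    have hP_ne : P ≠ ⊥ := by
      rintro rfl
      exact hP_irr.ne_zero rfl
    have hP_prime : P.IsPrime := (Ideal.prime_iff_isPrime hP_ne).mp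
      (UniqueFactorizationMonoid.irreducible_iff_prime.mp hP_irr)
    set v : HeightOneSpectrum R := ⟨P, hP_prime, hP_ne⟩
    have hv := h v
    rw [v.intValuationDef_if_neg ha, v.intValuationDef_if_neg hb, WithZero.exp_le_exp,
      neg_le_neg_iff, Int.ofNat_le] at hv
    convert hv
  have : Ideal.span {a} ≤ Ideal.span {b} :=
    Ideal.le_of_dvd (Associates.mk_le_mk_iff_dvd.mp key)
  exact Ideal.span_singleton_le_span_singleton.mp this

theorem my_mem_integers {R K : Type*} [CommRing R] [IsDedekindDomain R] [Field K]
    [Algebra R K] [IsFractionRing R K] {x : K}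
    (h : ∀ v : HeightOneSpectrum R, v.valuation K x ≤ 1) :
    ∃ y : R, algebraMap R K y = x := by
  obtain ⟨⟨a, b⟩, rfl⟩ := IsLocalization.mk'_surjective (nonZeroDivisors R) x
  by_cases ha : a = 0
  · exact ⟨0, by simp [ha]⟩
  have hb : (b : R) ≠ 0 := nonZeroDivisors.coe_ne_zero b
  have hle : ∀ v : HeightOneSpectrum R, v.intValuationDef a ≤ v.intValuationDef b := by
    intro v
    have := h v
    rw [v.valuation_of_mk'] at this
    have hbv : v.intValuation (b : R) ≠ 0 := v.intValuation_ne_zero _ hb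
    rw [div_le_one₀ (lt_of_le_of_ne (zero_le') (Ne.symm hbv))] at this
    exact this
  obtain ⟨c, rfl⟩ := my_dvd_of_intVal ha hb hle
  refine ⟨c, ?_⟩
  rw [eq_comm, IsLocalization.mk'_eq_iff_eq_mul]
  rw [← map_mul]
  ring_nf

theorem my_val_eq_one (K : Type*) [Field K] [NumberField K] (v : HeightOneSpectrum (𝓞 K))
    {ζ : K} (hζ : ζ ≠ 0) {ε : ℝ} (hε : 0 < ε) (hε2 : ε ≤ Real.log 2 / 2)
    (h1 : Real.exp (-ε) < finPlaceAbs K v ζ) (h2 : finPlaceAbs K v ζ < Real.exp ε) :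
    v.valuation K ζ = 1 := by
  letI := Fintype.ofFinite (𝓞 K ⧸ v.asIdeal)
  haveI : Nontrivial (𝓞 K ⧸ v.asIdeal) := Ideal.Quotient.nontrivial_iff.mpr v.isPrime.ne_top
  have hcard : 2 ≤ Nat.card (𝓞 K ⧸ v.asIdeal) := by
    rw [Nat.card_eq_fintype_card]
    exact Fintype.one_lt_card
  have he : (Nat.card (𝓞 K ⧸ v.asIdeal) : NNReal) ≠ 0 := by
    simp only [ne_eq, Nat.cast_eq_zero]
    omega
  have hm : v.valuation K ζ ≠ 0 := (Valuation.ne_zero_iff _).mpr hζ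
  rw [finPlaceAbs, dif_neg he, WithZeroMulInt.toNNReal_neg_apply he hm] at h1 h2
  set n : ℤ := Multiplicative.toAdd (WithZero.unzero hm) with hn
  have hcoe : (((Nat.card (𝓞 K ⧸ v.asIdeal) : NNReal) ^ n : NNReal) : ℝ)
      = (Nat.card (𝓞 K ⧸ v.asIdeal) : ℝ) ^ n := by
    push_cast
    rfl
  rw [hcoe] at h1 h2
  set q : ℝ := (Nat.card (𝓞 K ⧸ v.asIdeal) : ℝ) with hq
  have hq2 : (2 : ℝ) ≤ q := by rw [hq]; exact_mod_cast hcard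
  have hq1 : (1 : ℝ) ≤ q := by linarith
  have hlog2 : 0 < Real.log 2 := Real.log_pos (by norm_num)
  have hexpε : Real.exp ε < 2 := by
    calc Real.exp ε ≤ Real.exp (Real.log 2 / 2) := Real.exp_le_exp.mpr hε2
    _ < Real.exp (Real.log 2) := Real.exp_lt_exp.mpr (by linarith)
    _ = 2 := Real.exp_log (by norm_num)
  have hexpnε : (2 : ℝ)⁻¹ < Real.exp (-ε) := by
    have : Real.exp (-Real.log 2) < Real.exp (-ε) := Real.exp_lt_exp.mpr (by linarith)
    rwa [Real.exp_neg, Real.exp_log (by norm_num)] at this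
  have hn0 : n = 0 := by
    rcases lt_trichotomy n 0 with h | h | h
    · exfalso
      have : q ^ n ≤ q ^ (-1 : ℤ) := zpow_le_zpow_right₀ hq1 (by omega)
      have h2inv : q ^ (-1 : ℤ) ≤ 2⁻¹ := by
        rw [zpow_neg_one]
        exact inv_anti₀ (by norm_num) hq2
      linarith
    · exact h
    · exfalso
      have : q ^ (1 : ℤ) ≤ q ^ n := zpow_le_zpow_right₀ hq1 (by omega)
      rw [zpow_one] at this
      linarith
  have huz : WithZero.unzero hm = 1 := by
    have h := hn0
    rw [hn] at h
    exact toAdd_eq_zero.mp h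
  rw [← WithZero.coe_unzero hm, huz, WithZero.coe_one]

open NumberField.Units NumberField.Units.dirichletUnitTheorem NumberField.InfinitePlace in
theorem my_exists_r (K : Type*) [Field K] [NumberField K] : ∃ r : ℝ, 0 < r ∧ r ≤ 1 ∧
    ∀ x ∈ unitLattice K, ‖x‖ < r → x = 0 := by
  have hfin := unitLattice_inter_ball_finite K 1
  set F := hfin.toFinset.erase 0 with hF
  by_cases hne : F.Nonempty
  · refine ⟨min (F.inf' hne (fun x => ‖x‖)) 1, ?_, min_le_right _ _, ?_⟩
    · refine lt_min ?_ one_pos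
      rw [Finset.lt_inf'_iff]
      intro x hx
      have : x ≠ 0 := (Finset.mem_erase.mp hx).1
      exact norm_pos_iff.mpr this
    · intro x hx hnorm
      by_contra hx0
      have hxF : x ∈ F := by
        rw [hF, Finset.mem_erase, Set.Finite.mem_toFinset]
        exact ⟨hx0, hx, by
          rw [Metric.mem_closedBall, dist_zero_right]
          exact le_trans hnorm.le (min_le_right _ _)⟩
      have := Finset.inf'_le (fun x => ‖x‖) hxF
      have := lt_of_lt_of_le hnorm (min_le_left _ _)
      linarith
  · refine ⟨1, one_pos, le_refl _, fun x hx hnorm => ?_⟩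
    by_contra hx0
    refine hne ⟨x, ?_⟩
    rw [hF, Finset.mem_erase, Set.Finite.mem_toFinset]
    exact ⟨hx0, hx, by rw [Metric.mem_closedBall, dist_zero_right]; exact hnorm.le⟩

open NumberField.Units NumberField.Units.dirichletUnitTheorem NumberField.InfinitePlace in
/-- There is an `ε > 0`, depending only on the number field `K`, such that any nonzero
`ζ ∈ K` all of whose absolute values (at all infinite and finite places) lie strictly
between `e^{-ε}` and `e^{ε}`, and whose absolute value equals `1` at all but finitely
many places, is a root of unity. -/
theorem stmt_2 (K : Type*) [Field K] [NumberField K] :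
    ∃ ε : ℝ, 0 < ε ∧ ∀ ζ : K, ζ ≠ 0 →
      (∀ w : InfinitePlace K, Real.exp (-ε) < w ζ ∧ w ζ < Real.exp ε) →
      (∀ v : HeightOneSpectrum (𝓞 K),
        Real.exp (-ε) < finPlaceAbs K v ζ ∧ finPlaceAbs K v ζ < Real.exp ε) →
      {v : HeightOneSpectrum (𝓞 K) | finPlaceAbs K v ζ ≠ 1}.Finite →
      ∃ n : ℕ, 0 < n ∧ ζ ^ n = 1 := by
  obtain ⟨r, hr0, hr1, hr⟩ := my_exists_r K
  have hlog2 : 0 < Real.log 2 := Real.log_pos (by norm_num)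
  set ε := min (r/4) (Real.log 2 / 2) with hε_def
  have hε0 : 0 < ε := lt_min (by linarith) (by linarith)
  have hεr : ε ≤ r/4 := min_le_left _ _
  refine ⟨ε, hε0, fun ζ hζ hinf hfin _ => ?_⟩
  have hval : ∀ v : HeightOneSpectrum (𝓞 K), v.valuation K ζ = 1 := fun v =>
    my_val_eq_one K v hζ hε0 (min_le_right _ _) (hfin v).1 (hfin v).2
  obtain ⟨y, hy⟩ := my_mem_integers (R := 𝓞 K) (fun v => (hval v).le)
  obtain ⟨y', hy'⟩ := my_mem_integers (R := 𝓞 K) (x := ζ⁻¹)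
    (fun v => by rw [map_inv₀, hval v, inv_one])
  have hinj : Function.Injective (algebraMap (𝓞 K) K) := IsFractionRing.injective (𝓞 K) K
  have hyy' : y * y' = 1 := by
    apply hinj
    rw [map_mul, hy, hy', map_one, mul_inv_cancel₀ hζ]
  have hy'y : y' * y = 1 := by rw [mul_comm]; exact hyy'
  let u : (𝓞 K)ˣ := ⟨y, y', hyy', hy'y⟩
  have hcoe : ((u : 𝓞 K) : K) = ζ := hy
  have hlogsmall : ∀ w : InfinitePlace K, |Real.log (w ζ)| < ε := by
    intro w
    have hpos : 0 < w ζ := pos_iff.mpr hζ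
    rw [abs_lt]
    exact ⟨(Real.lt_log_iff_exp_lt hpos).mpr (hinf w).1,
      (Real.log_lt_iff_lt_exp hpos).mpr (hinf w).2⟩
  have hnorm : ‖logEmbedding K (Additive.ofMul u)‖ < r := by
    rw [pi_norm_lt_iff hr0]
    intro w
    rw [logEmbedding_component]
    have hmult : (mult w.val : ℝ) ≤ 2 := by rw [mult]; split_ifs <;> norm_num
    have harg : ((w : InfinitePlace K) ((algebraMap (𝓞 K) K) (u : 𝓞 K)))
        = (w : InfinitePlace K) ζ := by
      rw [← NumberField.RingOfIntegers.coe_eq_algebraMap, hcoe]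
    rw [Real.norm_eq_abs, abs_mul, Nat.abs_cast, harg]
    calc (mult w.val : ℝ) * |Real.log (w.val ζ)| ≤ 2 * |Real.log (w.val ζ)| :=
          mul_le_mul_of_nonneg_right hmult (abs_nonneg _)
      _ < 2 * ε := by linarith [hlogsmall w.val]
      _ ≤ r/2 := by linarith
      _ < r := by linarith
  have hmem : logEmbedding K (Additive.ofMul u) ∈ unitLattice K :=
    ⟨Additive.ofMul u, trivial, rfl⟩
  have h0 := hr _ hmem hnorm
  have htor : u ∈ torsion K := logEmbedding_eq_zero_iff.mp h0
  have hfo : IsOfFinOrder u := htor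
  obtain ⟨n, hn, hun⟩ := isOfFinOrder_iff_pow_eq_one.mp hfo
  refine ⟨n, hn, ?_⟩
  have : ((u : 𝓞 K) : K) ^ n = 1 := by
    have := congrArg (Units.val) hun
    rw [Units.val_pow_eq_pow_val, Units.val_one] at this
    rw [← map_pow, ← NumberField.RingOfIntegers.coe_eq_algebraMap] at *
    push_cast [this]
    rfl
  rwa [hcoe] at this
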